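/- With T the E0 state transition map as above, the inverse map T⁻¹ acts by shifting each LFSR block right by one position with new first entries x₂₄+x₁₉+x₁₁+x₇ (i.e., determined by x(0) = x(25) + x(5) + x(13) + x(17) solved for the oldest bit, and analogously for the other three registers), and recovering the previous FSM state (c₋₁, d₋₁) from (c₀, c₁, d₀, d₁) and the appropriate LFSR taps via the polynomial formulas h₀, h₁ obtained by solving the combiner equations; explicitly, composing the given right-shift-and-combiner-solve map S with T yields the identity on GF(2)¹³². -/
import Mathlib


/-- The 132-bit internal state of the Bluetooth cipher E0. -/
structure E0State where
  x : Fin 25 → ZMod 2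
  y : Fin 31 → ZMod 2
  z : Fin 33 → ZMod 2
  u : Fin 39 → ZMod 2
  c0 : ZMod 2
  c1 : ZMod 2
  d0 : ZMod 2
  d1 : ZMod 2

/-- The E0 state transition map. -/
def E0T (s : E0State) : E0State where
  x := fun j => if h : (j : ℕ) + 1 < 25 then s.x ⟨(j : ℕ) + 1, h⟩
                else s.x 0 + s.x 5 + s.x 13 + s.x 17
  y := fun j => if h : (j : ℕ) + 1 < 31 then s.y ⟨(j : ℕ) + 1, h⟩
                else s.y 0 + s.y 7 + s.y 15 + s.y 19
  z := fun j => if h : (j : ℕ) + 1 < 33 then s.z ⟨(j : ℕ) + 1, h⟩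
                else s.z 0 + s.z 5 + s.z 9 + s.z 29
  u := fun j => if h : (j : ℕ) + 1 < 39 then s.u ⟨(j : ℕ) + 1, h⟩
                else s.u 0 + s.u 3 + s.u 11 + s.u 35
  c0 := s.c1
  c1 :=
    s.x 1 * s.c1 + s.y 7 * s.c1 + s.z 1 * s.c1 + s.u 7 * s.c1
    + s.x 1 * s.y 7 + s.x 1 * s.z 1 + s.x 1 * s.u 7 + s.y 7 * s.z 1
    + s.y 7 * s.u 7 + s.z 1 * s.u 7 + s.c1 + s.d1 + s.c0 + s.d0
  d0 := s.d1
  d1 :=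
    s.x 1 * s.y 7 * s.z 1 * s.u 7 + s.x 1 * s.y 7 * s.d1 + s.x 1 * s.z 1 * s.d1
    + s.x 1 * s.u 7 * s.d1 + s.y 7 * s.z 1 * s.d1 + s.y 7 * s.u 7 * s.d1
    + s.z 1 * s.u 7 * s.d1 + s.x 1 * s.c1 * s.d1 + s.y 7 * s.c1 * s.d1
    + s.z 1 * s.c1 * s.d1 + s.u 7 * s.c1 * s.d1 + s.x 1 * s.y 7 * s.z 1 * s.c1
    + s.x 1 * s.y 7 * s.u 7 * s.c1 + s.x 1 * s.z 1 * s.u 7 * s.c1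
    + s.y 7 * s.z 1 * s.u 7 * s.c1 + s.d1 + s.c0

/-- The quadratic part of the combiner equation for `c`, evaluated on the taps
of the previous state, i.e. on `x(0), y(6), z(0), u(6), c(0)`. -/
def E0lin (s : E0State) : ZMod 2 :=
  s.x 0 * s.c0 + s.y 6 * s.c0 + s.z 0 * s.c0 + s.u 6 * s.c0
  + s.x 0 * s.y 6 + s.x 0 * s.z 0 + s.x 0 * s.u 6 + s.y 6 * s.z 0
  + s.y 6 * s.u 6 + s.z 0 * s.u 6

/-- The higher-degree part of the combiner equation for `d`, evaluated on the
taps of the previous state. -/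
def E0big (s : E0State) : ZMod 2 :=
  s.x 0 * s.y 6 * s.z 0 * s.u 6 + s.x 0 * s.y 6 * s.d0 + s.x 0 * s.z 0 * s.d0
  + s.x 0 * s.u 6 * s.d0 + s.y 6 * s.z 0 * s.d0 + s.y 6 * s.u 6 * s.d0
  + s.z 0 * s.u 6 * s.d0 + s.x 0 * s.c0 * s.d0 + s.y 6 * s.c0 * s.d0
  + s.z 0 * s.c0 * s.d0 + s.u 6 * s.c0 * s.d0 + s.x 0 * s.y 6 * s.z 0 * s.c0
  + s.x 0 * s.y 6 * s.u 6 * s.c0 + s.x 0 * s.z 0 * s.u 6 * s.c0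
  + s.y 6 * s.z 0 * s.u 6 * s.c0

/-- The candidate inverse of the E0 state transition map: each LFSR block is
shifted right by one position, the new first entry being obtained by solving
the linear recurrence for the oldest bit, and the previous FSM state
`(c₋₁, d₋₁)` is recovered by solving the combiner equations. -/
def E0S (s : E0State) : E0State where
  x := fun j => if h : 0 < (j : ℕ) then
                  s.x ⟨(j : ℕ) - 1, Nat.lt_of_le_of_lt (Nat.sub_le _ _) j.isLt⟩
                else s.x 24 + s.x 4 + s.x 12 + s.x 16
  y := fun j => if h : 0 < (j : ℕ) then
                  s.y ⟨(j : ℕ) - 1, Nat.lt_of_le_of_lt (Nat.sub_le _ _) j.isLt⟩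
                else s.y 30 + s.y 6 + s.y 14 + s.y 18
  z := fun j => if h : 0 < (j : ℕ) then
                  s.z ⟨(j : ℕ) - 1, Nat.lt_of_le_of_lt (Nat.sub_le _ _) j.isLt⟩
                else s.z 32 + s.z 4 + s.z 8 + s.z 28
  u := fun j => if h : 0 < (j : ℕ) then
                  s.u ⟨(j : ℕ) - 1, Nat.lt_of_le_of_lt (Nat.sub_le _ _) j.isLt⟩
                else s.u 38 + s.u 2 + s.u 10 + s.u 34
  c0 := s.d1 + s.d0 + E0big s
  c1 := s.c0
  d0 := s.c1 + s.d1 + s.c0 + E0lin s + E0big s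
  d1 := s.d0

private lemma E0State.ext' {s t : E0State} (hx : s.x = t.x) (hy : s.y = t.y)
    (hz : s.z = t.z) (hu : s.u = t.u) (hc0 : s.c0 = t.c0) (hc1 : s.c1 = t.c1)
    (hd0 : s.d0 = t.d0) (hd1 : s.d1 = t.d1) : s = t := by
  cases s; cases t; simp_all

private lemma zm : ∀ a b c d : ZMod 2, a + b + c + d + b + c + d = a := by decide

private lemma k1 : ∀ p q r t c0 c1 d0 d1 : ZMod 2,
    (E0S (E0T ⟨fun _ => p, fun _ => q, fun _ => r, fun _ => t, c0, c1, d0, d1⟩)).c0 = c0 := by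
  decide

private lemma k2 : ∀ p q r t c0 c1 d0 d1 : ZMod 2,
    (E0S (E0T ⟨fun _ => p, fun _ => q, fun _ => r, fun _ => t, c0, c1, d0, d1⟩)).d0 = d0 := by
  decide

private lemma k3 : ∀ p q r t c0 c1 d0 d1 : ZMod 2,
    (E0T (E0S ⟨fun _ => p, fun _ => q, fun _ => r, fun _ => t, c0, c1, d0, d1⟩)).c1 = c1 := by
  decide

private lemma k4 : ∀ p q r t c0 c1 d0 d1 : ZMod 2,
    (E0T (E0S ⟨fun _ => p, fun _ => q, fun _ => r, fun _ => t, c0, c1, d0, d1⟩)).d1 = d1 := by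
  decide

/-- `E0S` is a two-sided inverse of the E0 state transition map. -/
theorem stmt_14 : E0S ∘ E0T = id ∧ E0T ∘ E0S = id := by
  constructor
  · funext s
    obtain ⟨x,y,z,u,c0,c1,d0,d1⟩ := s
    refine E0State.ext' ?_ ?_ ?_ ?_ ?_ ?_ ?_ ?_
    · funext j; fin_cases j <;> first | rfl | exact zm _ _ _ _
    · funext j; fin_cases j <;> first | rfl | exact zm _ _ _ _
    · funext j; fin_cases j <;> first | rfl | exact zm _ _ _ _
    · funext j; fin_cases j <;> first | rfl | exact zm _ _ _ _
    · exact k1 (x 1) (y 7) (z 1) (u 7) c0 c1 d0 d1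
    · rfl
    · exact k2 (x 1) (y 7) (z 1) (u 7) c0 c1 d0 d1
    · rfl
  · funext s
    obtain ⟨x,y,z,u,c0,c1,d0,d1⟩ := s
    refine E0State.ext' ?_ ?_ ?_ ?_ ?_ ?_ ?_ ?_
    · funext j; fin_cases j <;> first | rfl | exact zm _ _ _ _
    · funext j; fin_cases j <;> first | rfl | exact zm _ _ _ _
    · funext j; fin_cases j <;> first | rfl | exact zm _ _ _ _
    · funext j; fin_cases j <;> first | rfl | exact zm _ _ _ _
    · rfl
    · exact k3 (x 0) (y 6) (z 0) (u 6) c0 c1 d0 d1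
    · rfl
    · exact k4 (x 0) (y 6) (z 0) (u 6) c0 c1 d0 d1
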